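/- For n ≥ 5, if a linear isometry of ℝ^(n choose 2) preserves the metric cone M_n and fixes every triangle facet of M_n (setwise), then it is the identity. -/

import Mathlib

/-- The coordinate index set of `ℝ^(n choose 2)`: unordered pairs of distinct
elements of `{1,…,n}`. -/
abbrev NDPair (n : ℕ) := {p : Sym2 (Fin n) // ¬ p.IsDiag}

/-- The coordinate indexed by the pair `{i, j}` for `i ≠ j`. -/
def ndPair {n : ℕ} (i j : Fin n) (h : i ≠ j) : NDPair n :=
  ⟨s(i, j), by simpa [Sym2.mk_isDiag_iff] using h⟩

/-- The metric cone `M_n ⊆ ℝ^(n choose 2)`, cut out by the triangle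
inequalities. -/
def metricConeE (n : ℕ) : Set (EuclideanSpace ℝ (NDPair n)) :=
  {x | ∀ (i j k : Fin n) (hij : i ≠ j) (hik : i ≠ k) (hjk : j ≠ k),
    x (ndPair i j hij) ≤ x (ndPair i k hik) + x (ndPair j k hjk)}

/-- The triangle facet `F(i,j;k) = {x ∈ M_n : x_{ij} = x_{ik} + x_{jk}}`. -/
def triangleFacet (n : ℕ) (i j k : Fin n) (hij : i ≠ j) (hik : i ≠ k)
    (hjk : j ≠ k) : Set (EuclideanSpace ℝ (NDPair n)) :=
  {x ∈ metricConeE n |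
    x (ndPair i j hij) = x (ndPair i k hik) + x (ndPair j k hjk)}

lemma ndPair_swap {n : ℕ} {i j : Fin n} (h1 : i ≠ j) (h2 : j ≠ i) :
    ndPair i j h1 = ndPair j i h2 := Subtype.ext Sym2.eq_swap

noncomputable def coordFn {n : ℕ} (x : EuclideanSpace ℝ (NDPair n)) (i j : Fin n) : ℝ :=
  if h : i = j then 0 else x (ndPair i j h)

lemma coordFn_apply {n : ℕ} (x : EuclideanSpace ℝ (NDPair n)) {i j : Fin n} (h : i ≠ j) :
    x (ndPair i j h) = coordFn x i j := by unfold coordFn; rw [dif_neg h]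

lemma coordFn_symm {n : ℕ} (x : EuclideanSpace ℝ (NDPair n)) (i j : Fin n) :
    coordFn x i j = coordFn x j i := by
  unfold coordFn
  by_cases h : i = j
  · subst h; simp
  · rw [dif_neg h, dif_neg (Ne.symm h)]
    exact congrArg x (ndPair_swap h (Ne.symm h))

noncomputable def cutVec (n : ℕ) (S : Fin n → Prop) [DecidablePred S] :
    EuclideanSpace ℝ (NDPair n) :=
  WithLp.toLp 2 fun (q : NDPair n) => Sym2.lift ⟨fun i j => if S i ↔ S j then (0:ℝ) else 1,
    fun i j => if_congr iff_comm rfl rfl⟩ q.1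

lemma cutVec_apply {n : ℕ} (S : Fin n → Prop) [DecidablePred S] {i j : Fin n} (h : i ≠ j) :
    cutVec n S (ndPair i j h) = if S i ↔ S j then 0 else 1 := by
  simp [cutVec, ndPair]

lemma cutVec_coord {n : ℕ} (S : Fin n → Prop) [DecidablePred S] {i j : Fin n} (h : i ≠ j) :
    coordFn (cutVec n S) i j = if S i ↔ S j then 0 else 1 := by
  rw [← coordFn_apply _ h, cutVec_apply S h]

lemma cutVec_mem_cone {n : ℕ} (S : Fin n → Prop) [DecidablePred S] :
    cutVec n S ∈ metricConeE n := by
  intro i j k hij hik hjk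
  rw [cutVec_apply S hij, cutVec_apply S hik, cutVec_apply S hjk]
  by_cases hi : S i <;> by_cases hj : S j <;> by_cases hk : S k <;>
    simp [hi, hj, hk] <;> norm_num

lemma exists_ne4 {n : ℕ} (hn : 5 ≤ n) (a b c d : Fin n) :
    ∃ e : Fin n, e ≠ a ∧ e ≠ b ∧ e ≠ c ∧ e ≠ d := by
  have hcard : ({a, b, c, d} : Finset (Fin n)).card < Fintype.card (Fin n) := by
    have h4 : ({a, b, c, d} : Finset (Fin n)).card ≤ 4 := by
      calc ({a, b, c, d} : Finset (Fin n)).card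
          ≤ ({b, c, d} : Finset (Fin n)).card + 1 := Finset.card_insert_le _ _
        _ ≤ (({c, d} : Finset (Fin n)).card + 1) + 1 := by
            exact Nat.add_le_add_right (Finset.card_insert_le _ _) 1
        _ ≤ ((({d} : Finset (Fin n)).card + 1) + 1) + 1 := by
            exact Nat.add_le_add_right (Nat.add_le_add_right (Finset.card_insert_le _ _) 1) 1
        _ = 4 := by simp
    simp only [Fintype.card_fin]
    omega
  have hnsub : ¬ (Finset.univ ⊆ ({a, b, c, d} : Finset (Fin n))) := by
    intro hsub
    have := Finset.card_le_card hsub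
    rw [Finset.card_univ] at this
    omega
  obtain ⟨e, _, he⟩ := Finset.not_subset.mp hnsub
  simp only [Finset.mem_insert, Finset.mem_singleton, not_or] at he
  exact ⟨e, he.1, he.2.1, he.2.2.1, he.2.2.2⟩

lemma cut_fixed {n : ℕ} (hn : 5 ≤ n)
    (f : EuclideanSpace ℝ (NDPair n) ≃ₗᵢ[ℝ] EuclideanSpace ℝ (NDPair n))
    (hcone : f '' metricConeE n = metricConeE n)
    (hfacets : ∀ (i j k : Fin n) (hij : i ≠ j) (hik : i ≠ k) (hjk : j ≠ k),
      f '' triangleFacet n i j k hij hik hjk = triangleFacet n i j k hij hik hjk)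
    (S : Fin n → Prop) [DecidablePred S] (a b : Fin n)
    (hS : ∀ i, S i → i = a ∨ i = b) (hSa : S a) :
    f (cutVec n S) = cutVec n S := by
  set v := cutVec n S with hvdef
  set y := f v with hydef
  have hvcone : v ∈ metricConeE n := cutVec_mem_cone S
  have hycone : y ∈ metricConeE n := by
    rw [← hcone]; exact ⟨v, hvcone, rfl⟩
  have hyc : ∀ (i j k : Fin n) (hij : i ≠ j) (hik : i ≠ k) (hjk : j ≠ k),
      coordFn y i j ≤ coordFn y i k + coordFn y j k := by
    intro i j k hij hik hjk
    have h := hycone i j k hij hik hjk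
    rwa [coordFn_apply y hij, coordFn_apply y hik, coordFn_apply y hjk] at h
  have step : ∀ (i j k : Fin n) (hij : i ≠ j) (hik : i ≠ k) (hjk : j ≠ k),
      coordFn v i j = coordFn v i k + coordFn v j k →
      coordFn y i j = coordFn y i k + coordFn y j k := by
    intro i j k hij hik hjk hveq
    have hvF : v ∈ triangleFacet n i j k hij hik hjk := by
      refine ⟨hvcone, ?_⟩
      rw [coordFn_apply v hij, coordFn_apply v hik, coordFn_apply v hjk]
      exact hveq
    have hyF : y ∈ triangleFacet n i j k hij hik hjk := by
      rw [← hfacets i j k hij hik hjk]; exact ⟨v, hvF, rfl⟩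
    have h := hyF.2
    rwa [coordFn_apply y hij, coordFn_apply y hik, coordFn_apply y hjk] at h
  have hnS : ∀ i : Fin n, i ≠ a → i ≠ b → ¬ S i := by
    intro i h1 h2 hSi
    rcases hS i hSi with h | h
    exacts [h1 h, h2 h]
  have cv0 : ∀ (p q : Fin n), ¬ S p → ¬ S q → p ≠ q → coordFn v p q = 0 := by
    intro p q hp hq hpq
    rw [cutVec_coord S hpq]
    simp [hp, hq]
  have cv1 : ∀ (p q : Fin n), S p → ¬ S q → (h : p ≠ q) → coordFn v p q = 1 := by
    intro p q hp hq hpq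
    rw [cutVec_coord S hpq]
    simp [hp, hq]
  have cv1' : ∀ (p q : Fin n), ¬ S p → S q → (h : p ≠ q) → coordFn v p q = 1 := by
    intro p q hp hq hpq
    rw [cutVec_coord S hpq]
    simp [hp, hq]
  have cvS : ∀ (p q : Fin n), S p → S q → (h : p ≠ q) → coordFn v p q = 0 := by
    intro p q hp hq hpq
    rw [cutVec_coord S hpq]
    simp [hp, hq]
  -- zero on pairs outside S
  have hT0 : ∀ (i j : Fin n), ¬ S i → ¬ S j → (h : i ≠ j) → coordFn y i j = 0 := by
    intro i j hi hj hij
    obtain ⟨k, hka, hkb, hki, hkj⟩ := exists_ne4 hn a b i j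
    have hk : ¬ S k := hnS k hka hkb
    have e1 := step i j k hij (Ne.symm hki) (Ne.symm hkj)
      (by rw [cv0 i j hi hj hij, cv0 i k hi hk (Ne.symm hki), cv0 j k hj hk (Ne.symm hkj)]; ring)
    have e2 := step i k j (Ne.symm hki) hij hkj
      (by rw [cv0 i k hi hk (Ne.symm hki), cv0 i j hi hj hij, cv0 k j hk hj hkj]; ring)
    have e3 := step j k i (Ne.symm hkj) (Ne.symm hij) hki
      (by rw [cv0 j k hj hk (Ne.symm hkj), cv0 j i hj hi (Ne.symm hij), cv0 k i hk hi hki]; ring)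
    rw [coordFn_symm y k j] at e2
    rw [coordFn_symm y j i, coordFn_symm y k i] at e3
    linarith
  -- constancy of y_{a j} over j outside S
  have hA : ∀ (j j' : Fin n), ¬ S j → ¬ S j' → coordFn y a j = coordFn y a j' := by
    intro j j' hj hj'
    rcases eq_or_ne j j' with rfl | hjj
    · rfl
    have haj : a ≠ j := fun h => hj (h ▸ hSa)
    have haj' : a ≠ j' := fun h => hj' (h ▸ hSa)
    have e := step a j j' haj haj' hjj
      (by rw [cv1 a j hSa hj haj, cv1 a j' hSa hj' haj', cv0 j j' hj hj' hjj]; ring)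
    rw [hT0 j j' hj hj' hjj] at e
    linarith
  -- y_{a b} = 0 when b ∈ S
  have hab0 : S b → (hab : a ≠ b) → coordFn y a b = 0 := by
    intro hSb hab
    obtain ⟨j, hja, hjb, _, _⟩ := exists_ne4 hn a b a b
    have hj : ¬ S j := hnS j hja hjb
    have haj : a ≠ j := Ne.symm hja
    have hbj : b ≠ j := Ne.symm hjb
    have e1 := step a j b haj hab (Ne.symm hbj)
      (by rw [cv1 a j hSa hj haj, cvS a b hSa hSb hab, cv1' j b hj hSb (Ne.symm hbj)]; ring)
    have e2 := step b j a hbj (Ne.symm hab) (Ne.symm haj)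
      (by rw [cv1 b j hSb hj hbj, cvS b a hSb hSa (Ne.symm hab), cv1' j a hj hSa (Ne.symm haj)]; ring)
    rw [coordFn_symm y j b] at e1
    rw [coordFn_symm y b a, coordFn_symm y j a] at e2
    linarith
  -- y_{s j} = y_{a j} for s ∈ S, j ∉ S
  have hB : ∀ (s : Fin n), S s → ∀ (j : Fin n), ¬ S j → coordFn y s j = coordFn y a j := by
    intro s hs j hj
    rcases eq_or_ne s a with rfl | hsa
    · rfl
    have hsb : s = b := (hS s hs).resolve_left hsa
    subst hsb
    have hab : a ≠ s := Ne.symm hsa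
    have haj : a ≠ j := fun h => hj (h ▸ hSa)
    have hbj : s ≠ j := fun h => hj (h ▸ hs)
    have e1 := step a j s haj hab (Ne.symm hbj)
      (by rw [cv1 a j hSa hj haj, cvS a s hSa hs hab, cv1' j s hj hs (Ne.symm hbj)]; ring)
    have e2 := step s j a hbj (Ne.symm hab) (Ne.symm haj)
      (by rw [cv1 s j hs hj hbj, cvS s a hs hSa (Ne.symm hab), cv1' j a hj hSa (Ne.symm haj)]; ring)
    rw [coordFn_symm y j s] at e1
    rw [coordFn_symm y s a, coordFn_symm y j a] at e2
    linarith
  -- zero on pairs inside S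
  have hSab0 : ∀ (s s' : Fin n), S s → S s' → (h : s ≠ s') → coordFn y s s' = 0 := by
    intro s s' hs hs' hss
    rcases hS s hs with rfl | rfl <;> rcases hS s' hs' with rfl | rfl
    · exact absurd rfl hss
    · exact hab0 hs' hss
    · rw [coordFn_symm]; exact hab0 hs (Ne.symm hss)
    · exact absurd rfl hss
  obtain ⟨j0, hj0a, hj0b, _, _⟩ := exists_ne4 hn a b a b
  have hj0 : ¬ S j0 := hnS j0 hj0a hj0b
  set t := coordFn y a j0 with htdef
  have hall : ∀ (i j : Fin n), i ≠ j → coordFn y i j = t * coordFn v i j := by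
    intro i j hij
    by_cases hi : S i <;> by_cases hj : S j
    · rw [hSab0 i j hi hj hij, cvS i j hi hj hij]; ring
    · rw [hB i hi j hj, hA j j0 hj hj0, cv1 i j hi hj hij]; ring
    · rw [coordFn_symm y i j, hB j hj i hi, hA i j0 hi hj0, cv1' i j hi hj hij]; ring
    · rw [hT0 i j hi hj hij, cv0 i j hi hj hij]; ring
  have hyv : y = t • v := by
    refine PiLp.ext fun q => ?_
    obtain ⟨z, hz⟩ := q
    revert hz
    induction z using Sym2.ind with
    | _ i j =>
      intro hz
      have hij : i ≠ j := by simpa [Sym2.mk_isDiag_iff] using hz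
      have h1 : (⟨s(i, j), hz⟩ : NDPair n) = ndPair i j hij := rfl
      rw [h1]
      have h2 : (t • v) (ndPair i j hij) = t * v (ndPair i j hij) := rfl
      rw [h2, coordFn_apply y hij, coordFn_apply v hij]
      exact hall i j hij
  obtain ⟨j1, hj1a, hj1b, hj1j0, _⟩ := exists_ne4 hn a b j0 j0
  have hj1 : ¬ S j1 := hnS j1 hj1a hj1b
  have ht0 : 0 ≤ t := by
    have h := hyc j0 j1 a (Ne.symm hj1j0) hj0a hj1a
    rw [hT0 j0 j1 hj0 hj1 (Ne.symm hj1j0)] at h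
    rw [coordFn_symm y j0 a, coordFn_symm y j1 a] at h
    rw [hA j1 j0 hj1 hj0] at h
    linarith
  have hvne : v ≠ 0 := by
    intro h0
    have h1 : v (ndPair a j0 (Ne.symm hj0a)) = 0 := by rw [h0]; rfl
    rw [hvdef, cutVec_apply S (Ne.symm hj0a)] at h1
    simp [hSa, hj0] at h1
  have hnormv : ‖v‖ ≠ 0 := norm_ne_zero_iff.mpr hvne
  have ht1 : t = 1 := by
    have h1 : ‖y‖ = |t| * ‖v‖ := by
      rw [hyv, norm_smul]; simp [Real.norm_eq_abs]
    have h2 : ‖v‖ = ‖y‖ := (f.norm_map v).symm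
    have h3 : (1 : ℝ) * ‖v‖ = |t| * ‖v‖ := by
      calc (1 : ℝ) * ‖v‖ = ‖v‖ := one_mul _
        _ = ‖y‖ := h2
        _ = |t| * ‖v‖ := h1
    have h4 : |t| = 1 := (mul_right_cancel₀ hnormv h3).symm
    rwa [abs_of_nonneg ht0] at h4
  rw [ht1, one_smul] at hyv
  exact hyv

lemma single_decomp {n : ℕ} (a b : Fin n) (hab : a ≠ b) :
    (EuclideanSpace.single (ndPair a b hab) (1:ℝ)) =
      (2⁻¹ : ℝ) • (cutVec n (· = a) + cutVec n (· = b)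
        - cutVec n (fun m => m = a ∨ m = b)) := by
  refine PiLp.ext fun q => ?_
  obtain ⟨z, hz⟩ := q
  revert hz
  induction z using Sym2.ind with
  | _ i j =>
    intro hz
    have hij : i ≠ j := by simpa [Sym2.mk_isDiag_iff] using hz
    have h1 : (⟨s(i, j), hz⟩ : NDPair n) = ndPair i j hij := rfl
    rw [h1]
    have hR : ((2⁻¹ : ℝ) • (cutVec n (· = a) + cutVec n (· = b)
          - cutVec n (fun m => m = a ∨ m = b))) (ndPair i j hij)
        = (2⁻¹ : ℝ) * (cutVec n (· = a) (ndPair i j hij)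
            + cutVec n (· = b) (ndPair i j hij)
            - cutVec n (fun m => m = a ∨ m = b) (ndPair i j hij)) := rfl
    rw [hR, cutVec_apply _ hij, cutVec_apply _ hij, cutVec_apply _ hij,
      EuclideanSpace.single_apply]
    have heq : (ndPair i j hij = ndPair a b hab) ↔ ((i = a ∧ j = b) ∨ (i = b ∧ j = a)) := by
      constructor
      · intro h
        exact Sym2.eq_iff.mp (congrArg Subtype.val h)
      · intro h
        exact Subtype.ext (Sym2.eq_iff.mpr h)
    rw [if_congr heq rfl rfl]
    have hba : ¬ b = a := fun h => hab h.symm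
    by_cases h1 : i = a <;> by_cases h2 : i = b <;> by_cases h3 : j = a <;>
      by_cases h4 : j = b <;> simp_all <;> norm_num


/-- for `n ≥ 5`, a linear isometry of `ℝ^(n choose 2)`
preserving `M_n` and fixing every triangle facet setwise is the identity. -/
theorem isometry_fixing_facets_is_id (n : ℕ) (hn : 5 ≤ n)
    (f : EuclideanSpace ℝ (NDPair n) ≃ₗᵢ[ℝ] EuclideanSpace ℝ (NDPair n))
    (hcone : f '' metricConeE n = metricConeE n)
    (hfacets : ∀ (i j k : Fin n) (hij : i ≠ j) (hik : i ≠ k) (hjk : j ≠ k),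
      f '' triangleFacet n i j k hij hik hjk = triangleFacet n i j k hij hik hjk) :
    ∀ x, f x = x := by
  have hsingle : ∀ q : NDPair n,
      f (EuclideanSpace.single q (1:ℝ)) = EuclideanSpace.single q 1 := by
    intro q
    obtain ⟨z, hz⟩ := q
    revert hz
    induction z using Sym2.ind with
    | _ a b =>
      intro hz
      have hab : a ≠ b := by simpa [Sym2.mk_isDiag_iff] using hz
      have h1 : (⟨s(a, b), hz⟩ : NDPair n) = ndPair a b hab := rfl
      rw [h1]
      have ha := cut_fixed hn f hcone hfacets (· = a) a a (fun i h => Or.inl h) rfl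
      have hb := cut_fixed hn f hcone hfacets (· = b) b b (fun i h => Or.inl h) rfl
      have hab' := cut_fixed hn f hcone hfacets (fun m => m = a ∨ m = b) a b
        (fun i h => h) (Or.inl rfl)
      rw [single_decomp a b hab, map_smul, map_sub, map_add, ha, hb, hab']
  intro x
  have hmaps : f.toLinearEquiv.toLinearMap
      = (LinearMap.id : EuclideanSpace ℝ (NDPair n) →ₗ[ℝ] EuclideanSpace ℝ (NDPair n)) := by
    apply Module.Basis.ext (EuclideanSpace.basisFun (NDPair n) ℝ).toBasis
    intro q
    simp only [OrthonormalBasis.coe_toBasis, EuclideanSpace.basisFun_apply,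
      LinearMap.id_coe, id_eq, LinearEquiv.coe_coe, LinearIsometryEquiv.coe_toLinearEquiv]
    exact hsingle q
  have h := LinearMap.ext_iff.mp hmaps x
  simpa using h
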